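/- Let n ∈ ℕ with n ≥ 1 and let s be an integer with 1 ≤ s ≤ m_n − 1. Then for every x ∈ I_{n+1}(e_{n−1} + e_n) one has |s·M_n·K_{s·M_n}(x)| ≥ M_n^2/(2π). -/

import Mathlib

open Finset
open scoped ENNReal NNReal

noncomputable section

namespace Vilenkin

/-- The generalized powers `M_0 = 1`, `M_{k+1} = m_k M_k`. -/
def M (m : ℕ → ℕ) : ℕ → ℕ
  | 0 => 1
  | k + 1 => m k * M m k

/-- The `j`-th digit of `n` in the mixed-radix system determined by `m`. -/
def digit (m : ℕ → ℕ) (n j : ℕ) : ℕ := (n / M m j) % m j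

/-- The Vilenkin group `G_m`, the complete direct product of the cyclic groups `Z_{m_k}`. -/
abbrev G (m : ℕ → ℕ) : Type := ∀ k : ℕ, ZMod (m k)

instance (n : ℕ) : MeasurableSpace (ZMod n) := ⊤

/-- The generalized Rademacher functions `r_k(x) = exp(2 π i x_k / m_k)`. -/
def rad (m : ℕ → ℕ) (k : ℕ) (x : G m) : ℂ :=
  Complex.exp (2 * Real.pi * Complex.I * ((x k).val : ℂ) / (m k : ℂ))

/-- The Vilenkin system `ψ_n = ∏_k r_k^{n_k}` (the product is finite). -/
def psi (m : ℕ → ℕ) (n : ℕ) (x : G m) : ℂ :=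
  ∏ j ∈ Finset.range (n + 1), rad m j x ^ digit m n j

/-- The Dirichlet kernels `D_n = ∑_{k=0}^{n-1} ψ_k`. -/
def D (m : ℕ → ℕ) (n : ℕ) (x : G m) : ℂ :=
  ∑ k ∈ Finset.range n, psi m k x

/-- The Fejér kernels `K_n = (1/n) ∑_{k=0}^{n-1} D_k`. -/
def K (m : ℕ → ℕ) (n : ℕ) (x : G m) : ℂ :=
  (n : ℂ)⁻¹ * ∑ k ∈ Finset.range n, D m k x

/-- The cylinder `I_n(x) = {y : y_j = x_j for j < n}`. -/
def cyl (m : ℕ → ℕ) (n : ℕ) (x : G m) : Set (G m) := {y | ∀ j < n, y j = x j}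

/-- The element `e_n` with `n`-th coordinate `1` and all other coordinates `0`. -/
def e (m : ℕ → ℕ) (n : ℕ) : G m := fun k => if k = n then 1 else 0


----------------- auxiliary lemmas -----------------

lemma M_pos (m : ℕ → ℕ) (hm : ∀ k, 2 ≤ m k) : ∀ k, 0 < M m k
  | 0 => by simp [M]
  | k + 1 => by
      have := hm k; have := M_pos m hm k
      simp only [M]; positivity

lemma M_mono (m : ℕ → ℕ) (hm : ∀ k, 2 ≤ m k) : Monotone (M m) := by
  apply monotone_nat_of_le_succ
  intro k
  have h1 := hm k
  have h2 := M_pos m hm k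
  calc M m k = 1 * M m k := (one_mul _).symm
    _ ≤ m k * M m k := Nat.mul_le_mul_right _ (by omega)

lemma lt_M (m : ℕ → ℕ) (hm : ∀ k, 2 ≤ m k) : ∀ k, k < M m k
  | 0 => by simp [M]
  | k + 1 => by
      have h1 := hm k
      have h2 := lt_M m hm k
      have : 2 * M m k ≤ m k * M m k := Nat.mul_le_mul_right _ h1
      simp only [M]; omega

lemma digit_eq_zero (m : ℕ → ℕ) {j i : ℕ} (h : j < M m i) : digit m j i = 0 := by
  rw [digit, Nat.div_eq_of_lt h, Nat.zero_mod]

lemma norm_exp_I_sub_one (θ : ℝ) : ‖Complex.exp (θ * Complex.I) - 1‖ = 2 * |Real.sin (θ/2)| := by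
  rw [Complex.exp_mul_I]
  have h : (Complex.cos θ + Complex.sin θ * Complex.I - 1)
      = Complex.ofReal (Real.cos θ - 1) + Complex.ofReal (Real.sin θ) * Complex.I := by
    push_cast; ring
  rw [h, Complex.norm_add_mul_I]
  have h2 : (Real.cos θ - 1)^2 + (Real.sin θ)^2 = (2 * |Real.sin (θ/2)|)^2 := by
    have hc : Real.cos (2 * (θ/2)) = 2 * Real.cos (θ/2)^2 - 1 := Real.cos_two_mul _
    rw [show 2 * (θ/2) = θ by ring] at hc
    have h2 := Real.sin_sq_add_cos_sq (θ/2)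
    have h3 := Real.sin_sq_add_cos_sq θ
    rw [mul_pow, _root_.sq_abs]
    nlinarith
  rw [h2, Real.sqrt_sq (by positivity)]

lemma key_sum (x : ℂ) (q : ℕ) (hx : x ≠ 1) (hq : x ^ q = 1) :
    (x - 1) * ∑ b ∈ range q, (b : ℂ) * x ^ b = q := by
  have hgeom : ∑ b ∈ range q, x ^ b = 0 := by
    rw [geom_sum_eq hx, hq, sub_self, zero_div]
  have H : ∀ p : ℕ, (x - 1) * ∑ b ∈ range p, (b : ℂ) * x ^ b
      = (p : ℂ) * x ^ p - x ^ p + 1 - ∑ b ∈ range p, x ^ b := by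
    intro p
    induction p with
    | zero => simp
    | succ p ih =>
      rw [Finset.sum_range_succ, Finset.sum_range_succ (f := fun b => x ^ b), mul_add, ih]
      push_cast
      ring
  rw [H, hq, hgeom, mul_one, sub_zero]
  ring

lemma geom_sum_zero (x : ℂ) (q : ℕ) (hx : x ≠ 1) (hq : x ^ q = 1) :
    ∑ b ∈ range q, x ^ b = 0 := by
  rw [geom_sum_eq hx, hq, sub_self, zero_div]

lemma exp_ne_one (q : ℕ) (hq : 2 ≤ q) :
    Complex.exp (↑(2*Real.pi/q) * Complex.I) ≠ 1 := by
  intro h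
  rw [Complex.exp_eq_one_iff] at h
  obtain ⟨k, hk⟩ := h
  have hπ := Real.pi_pos
  have h1 : ((2*Real.pi/q : ℝ) : ℂ) = (k : ℂ) * (2*(Real.pi:ℂ)) := by
    have := mul_right_cancel₀ Complex.I_ne_zero
      (hk.trans (by ring : ((k:ℂ)) * (2*↑Real.pi*Complex.I) = ((k:ℂ) * (2*↑Real.pi)) * Complex.I))
    exact this
  have h2 : (2*Real.pi/q : ℝ) = (k : ℝ) * (2*Real.pi) := by exact_mod_cast h1
  have hq' : (2:ℝ) ≤ q := by exact_mod_cast hq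
  have hle : 2*Real.pi/q ≤ Real.pi := by
    rw [div_le_iff₀ (by linarith)]
    nlinarith
  have hpos : 0 < 2*Real.pi/q := by positivity
  rcases le_or_gt (k:ℝ) 0 with h | h
  · nlinarith
  · have : (1:ℝ) ≤ k := by exact_mod_cast (by exact_mod_cast h : (0:ℤ) < k)
    nlinarith

lemma exp_pow_root (q : ℕ) (hq : q ≠ 0) :
    (Complex.exp (↑(2*Real.pi/q) * Complex.I)) ^ q = 1 := by
  rw [← Complex.exp_nat_mul]
  have hq0 : (q:ℂ) ≠ 0 := Nat.cast_ne_zero.mpr hq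
  have : (q:ℂ) * (↑(2*Real.pi/q) * Complex.I) = 2*↑Real.pi*Complex.I := by
    push_cast
    field_simp
  rw [this, Complex.exp_two_pi_mul_I]

lemma sin_div_le (q s : ℕ) (hq : 2 ≤ q) (hs1 : 1 ≤ s) (hs2 : s ≤ q - 1) :
    Real.sin (Real.pi / q) ≤ Real.sin (Real.pi * s / q) := by
  have hπ := Real.pi_pos
  have hq0 : (0:ℝ) < q := by positivity
  have hsq : (s:ℝ) + 1 ≤ q := by exact_mod_cast (by omega : s + 1 ≤ q)
  have hs1' : (1:ℝ) ≤ s := by exact_mod_cast hs1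
  have ha0 : 0 < Real.pi / q := by positivity
  have hab : Real.pi / q ≤ Real.pi * s / q :=
    (div_le_div_iff_of_pos_right hq0).mpr (by nlinarith)
  have hba : Real.pi * s / q ≤ Real.pi - Real.pi / q := by
    have h1 : Real.pi * s / q + Real.pi / q ≤ Real.pi := by
      rw [← add_div, div_le_iff₀ hq0]; nlinarith
    linarith
  rcases le_or_gt (Real.pi * s / q) (Real.pi/2) with h | h
  · exact Real.strictMonoOn_sin.monotoneOn ⟨by linarith, by linarith⟩ ⟨by linarith, h⟩ hab
  · rw [← Real.sin_pi_sub (Real.pi * s / q)]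
    have ha2 : Real.pi / q ≤ Real.pi / 2 :=
      div_le_div_of_nonneg_left hπ.le (by norm_num) (by exact_mod_cast hq)
    exact Real.strictMonoOn_sin.monotoneOn ⟨by linarith, ha2⟩
      ⟨by linarith, by linarith⟩ (by linarith)

lemma sum_sum_eq (g : ℕ → ℂ) : ∀ N : ℕ,
    ∑ k ∈ range N, ∑ j ∈ range k, g j = ∑ j ∈ range N, ((N - 1 - j : ℕ) : ℂ) * g j := by
  intro N
  induction N with
  | zero => simp
  | succ N ih =>
    rw [Finset.sum_range_succ, ih,
      Finset.sum_range_succ (f := fun j => ((N + 1 - 1 - j : ℕ) : ℂ) * g j)]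
    have h0 : (N + 1 - 1 - N : ℕ) = 0 := by omega
    rw [h0]
    simp only [Nat.cast_zero, zero_mul, add_zero]
    rw [← Finset.sum_add_distrib]
    apply Finset.sum_congr rfl
    intro j hj
    have hjN : j < N := mem_range.mp hj
    have h1 : (N + 1 - 1 - j : ℕ) = (N - 1 - j) + 1 := by omega
    rw [h1]
    push_cast
    ring

lemma sum_range_mul_eq (f : ℕ → ℂ) (p q : ℕ) :
    ∑ j ∈ range (p * q), f j = ∑ a ∈ range p, ∑ b ∈ range q, f (a * q + b) := by
  induction p with
  | zero => simp
  | succ p ih =>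
    rw [show (p + 1) * q = p * q + q by ring, Finset.sum_range_add, ih,
      Finset.sum_range_succ]

lemma psi_extend (m : ℕ → ℕ) (hm : ∀ k, 2 ≤ m k) (x : G m) (j L : ℕ) (hL : j + 1 ≤ L) :
    psi m j x = ∏ i ∈ range L, rad m i x ^ digit m j i := by
  apply Finset.prod_subset (Finset.range_subset_range.mpr hL)
  intro i hi hni
  have h1 : j + 1 ≤ i := by
    simp only [mem_range, not_lt] at hni
    exact hni
  have h2 : j < M m i := lt_of_lt_of_le (by omega : j < i) (le_of_lt (lt_M m hm i))
  rw [digit_eq_zero m h2, pow_zero]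

----------------- main theorem -----------------


/-- lower bound `|s M_n K_{s M_n}(x)| ≥ M_n^2 / (2π)` on `I_{n+1}(e_{n-1} + e_n)`. -/
theorem statement5 (m : ℕ → ℕ) (hm : ∀ k, 2 ≤ m k) (n : ℕ) (hn : 1 ≤ n)
    (s : ℕ) (hs1 : 1 ≤ s) (hs2 : s ≤ m n - 1)
    (x : G m) (hx : x ∈ cyl m (n + 1) (e m (n - 1) + e m n)) :
    (M m n : ℝ) ^ 2 / (2 * Real.pi) ≤ ‖((s * M m n : ℕ) : ℂ) * K m (s * M m n) x‖ := by
  obtain ⟨t, rfl⟩ : ∃ t, n = t + 1 := ⟨n - 1, by omega⟩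
  simp only [Nat.add_sub_cancel] at hx hs2 ⊢
  -- basic data
  have hmt := hm t
  have hmn := hm (t + 1)
  have hπ := Real.pi_pos
  have hmtR : (2:ℝ) ≤ (m t : ℝ) := by exact_mod_cast hmt
  have hmnR : (2:ℝ) ≤ (m (t+1) : ℝ) := by exact_mod_cast hmn
  have hmt0R : (0:ℝ) < (m t : ℝ) := by linarith
  have hmn0R : (0:ℝ) < (m (t+1) : ℝ) := by linarith
  have hsR : (s:ℝ) ≤ (m (t+1) : ℝ) := by exact_mod_cast (by omega : s ≤ m (t+1))
  set M' : ℕ := M m t with hM'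
  have hMn : M m (t + 1) = m t * M' := rfl
  set Mn : ℕ := M m (t + 1) with hMndef
  have hM'pos : 0 < M' := M_pos m hm t
  have hMnpos : 0 < Mn := M_pos m hm (t + 1)
  set N : ℕ := s * Mn with hN
  have hNpos : 0 < N := Nat.mul_pos (by omega) hMnpos
  -- coordinates of x
  have hx' : ∀ j < t + 2, x j = e m t j + e m (t + 1) j := fun j hj => hx j hj
  have hxt : x t = 1 := by
    rw [hx' t (by omega)]
    simp [e, show t ≠ t + 1 by omega]
  have hxt1 : x (t + 1) = 1 := by
    rw [hx' (t + 1) (by omega)]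
    simp [e, show t + 1 ≠ t by omega]
  have hxlt : ∀ i < t, x i = 0 := by
    intro i hi
    rw [hx' i (by omega)]
    simp [e, show i ≠ t by omega, show i ≠ t + 1 by omega]
  -- the roots of unity
  set θ₁ : ℝ := 2 * Real.pi / (m t) with hθ₁
  set θ₂ : ℝ := 2 * Real.pi / (m (t + 1)) with hθ₂
  set ε : ℂ := Complex.exp (↑θ₁ * Complex.I) with hε
  set δ : ℂ := Complex.exp (↑θ₂ * Complex.I) with hδ
  haveI : Fact (1 < m t) := ⟨by omega⟩
  haveI : Fact (1 < m (t + 1)) := ⟨by omega⟩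
  have hradt : rad m t x = ε := by
    rw [rad, hxt, ZMod.val_one, hε, hθ₁]
    congr 1
    have hne : (m t : ℂ) ≠ 0 := Nat.cast_ne_zero.mpr (by omega)
    push_cast
    field_simp
  have hradt1 : rad m (t + 1) x = δ := by
    rw [rad, hxt1, ZMod.val_one, hδ, hθ₂]
    congr 1
    have hne : (m (t + 1) : ℂ) ≠ 0 := Nat.cast_ne_zero.mpr (by omega)
    push_cast
    field_simp
  have hεne : ε ≠ 1 := exp_ne_one (m t) hmt
  have hδne : δ ≠ 1 := exp_ne_one (m (t + 1)) hmn
  have hεpow : ε ^ (m t) = 1 := exp_pow_root (m t) (by omega)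
  have hδpow : δ ^ (m (t + 1)) = 1 := exp_pow_root (m (t + 1)) (by omega)
  -- psi values
  have hpsi : ∀ j < m (t + 1) * Mn,
      psi m j x = ε ^ digit m j t * δ ^ digit m j (t + 1) := by
    intro j hj
    have hjM : j < M m (t + 2) := hj
    rw [psi_extend m hm x j (max (j + 1) (t + 2)) (le_max_left _ _)]
    rw [← Finset.prod_subset
      (show ({t, t + 1} : Finset ℕ) ⊆ range (max (j + 1) (t + 2)) by
        intro i hi
        simp only [Finset.mem_insert, Finset.mem_singleton] at hi
        simp only [mem_range, lt_max_iff]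
        omega)
      (by
        intro i hi hni
        simp only [Finset.mem_insert, Finset.mem_singleton, not_or] at hni
        obtain ⟨hi1, hi2⟩ := hni
        rcases lt_or_ge i t with h | h
        · have hx0 : x i = 0 := hxlt i h
          haveI : NeZero (m i) := ⟨by have := hm i; omega⟩
          rw [rad, hx0, ZMod.val_zero]
          simp
        · have hti : t + 2 ≤ i := by omega
          have : j < M m i := lt_of_lt_of_le hjM (M_mono m hm hti)
          rw [digit_eq_zero m this, pow_zero])]
    rw [Finset.prod_insert (by simp), Finset.prod_singleton, hradt, hradt1]
  -- digit values
  have hdig1 : ∀ a b c : ℕ, a < s → b < m t → c < M' →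
      digit m (a * Mn + (b * M' + c)) (t + 1) = a := by
    intro a b c ha hb hc
    have hr : b * M' + c < Mn := by
      rw [hMn] at *
      calc b * M' + c < b * M' + M' := by omega
        _ = (b + 1) * M' := by ring
        _ ≤ m t * M' := Nat.mul_le_mul_right _ (by omega)
    rw [digit, ← hMndef, show a * Mn + (b * M' + c) = (b * M' + c) + a * Mn by ring,
      Nat.add_mul_div_right _ _ hMnpos, Nat.div_eq_of_lt hr, zero_add,
      Nat.mod_eq_of_lt (by omega : a < m (t + 1))]
  have hdig0 : ∀ a b c : ℕ, a < s → b < m t → c < M' →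
      digit m (a * Mn + (b * M' + c)) t = b := by
    intro a b c ha hb hc
    have hrw : a * Mn + (b * M' + c) = c + (b + a * m t) * M' := by
      rw [hMn]; ring
    rw [digit, ← hM', hrw, Nat.add_mul_div_right _ _ hM'pos, Nat.div_eq_of_lt hc, zero_add,
      Nat.add_mul_mod_self_right, Nat.mod_eq_of_lt hb]
  -- reduce goal to T
  set T : ℂ := ∑ k ∈ range N, D m k x with hT
  have hKeq : ((N : ℕ) : ℂ) * K m N x = T := by
    rw [K, ← mul_assoc, mul_inv_cancel₀ (Nat.cast_ne_zero.mpr (by omega)), one_mul, hT]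
  rw [hKeq]
  -- Step A/B: T as weighted sum
  set C : ℂ := (N : ℂ) - 1 with hC
  have hTB : T = ∑ j ∈ range N, (C - (j : ℂ)) * psi m j x := by
    rw [hT]
    simp only [D]
    rw [sum_sum_eq (fun j => psi m j x) N]
    apply Finset.sum_congr rfl
    intro j hj
    have hjN : j < N := mem_range.mp hj
    have h1 : (N - 1 - j : ℕ) = N - (j + 1) := by omega
    rw [h1, Nat.cast_sub (by omega)]
    push_cast
    ring
  -- the two partial sums
  set B : ℂ := ∑ b ∈ range (m t), (b : ℂ) * ε ^ b with hB
  set Gs : ℂ := ∑ a ∈ range s, δ ^ a with hGs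
  have hgeps : ∑ b ∈ range (m t), ε ^ b = 0 := geom_sum_zero ε (m t) hεne hεpow
  -- Step C/D
  have hTC : T = Gs * (-((M' : ℂ) * (M' : ℂ)) * B) := by
    rw [hTB, hN, sum_range_mul_eq]
    have hinner : ∀ a ∈ range s,
        ∑ j' ∈ range Mn, (C - ((a * Mn + j' : ℕ) : ℂ)) * psi m (a * Mn + j') x
        = δ ^ a * (-((M' : ℂ) * (M' : ℂ)) * B) := by
      intro a ha
      have haS : a < s := mem_range.mp ha
      rw [show range Mn = range (m t * M') by rw [hMn], sum_range_mul_eq]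
      have hbsum : ∀ b ∈ range (m t),
          ∑ c ∈ range M', (C - ((a * Mn + (b * M' + c) : ℕ) : ℂ)) * psi m (a * Mn + (b * M' + c)) x
          = (((M' : ℂ) * (C - (a : ℂ) * (Mn : ℂ)) - (M' : ℂ) * (M' : ℂ) * (b : ℂ)
              - ∑ c ∈ range M', (c : ℂ)) * ε ^ b) * δ ^ a := by
        intro b hb
        have hbm : b < m t := mem_range.mp hb
        have hterm : ∀ c ∈ range M',
            (C - ((a * Mn + (b * M' + c) : ℕ) : ℂ)) * psi m (a * Mn + (b * M' + c)) x
            = ((C - (a : ℂ) * (Mn : ℂ) - (b : ℂ) * (M' : ℂ)) - (c : ℂ)) * (ε ^ b * δ ^ a) := by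
          intro c hc
          have hcM : c < M' := mem_range.mp hc
          have hjlt : a * Mn + (b * M' + c) < m (t + 1) * Mn := by
            have h1 : b * M' + c < Mn := by
              rw [hMn]
              calc b * M' + c < b * M' + M' := by omega
                _ = (b + 1) * M' := by ring
                _ ≤ m t * M' := Nat.mul_le_mul_right _ (by omega)
            calc a * Mn + (b * M' + c) < a * Mn + Mn := by omega
              _ = (a + 1) * Mn := by ring
              _ ≤ m (t + 1) * Mn := Nat.mul_le_mul_right _ (by omega)
          rw [hpsi _ hjlt, hdig0 a b c haS hbm hcM, hdig1 a b c haS hbm hcM]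
          push_cast
          ring
        rw [Finset.sum_congr rfl hterm, ← Finset.sum_mul]
        have : ∑ c ∈ range M', ((C - (a : ℂ) * (Mn : ℂ) - (b : ℂ) * (M' : ℂ)) - (c : ℂ))
            = (M' : ℂ) * (C - (a : ℂ) * (Mn : ℂ)) - (M' : ℂ) * (M' : ℂ) * (b : ℂ)
              - ∑ c ∈ range M', (c : ℂ) := by
          rw [Finset.sum_sub_distrib, Finset.sum_const, card_range, nsmul_eq_mul]
          ring
        rw [this]
        ring
      rw [Finset.sum_congr rfl hbsum, ← Finset.sum_mul]
      have hsplit : ∀ b ∈ range (m t),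
          ((M' : ℂ) * (C - (a : ℂ) * (Mn : ℂ)) - (M' : ℂ) * (M' : ℂ) * (b : ℂ)
            - ∑ c ∈ range M', (c : ℂ)) * ε ^ b
          = ((M' : ℂ) * (C - (a : ℂ) * (Mn : ℂ)) - ∑ c ∈ range M', (c : ℂ)) * ε ^ b
            - ((M' : ℂ) * (M' : ℂ)) * ((b : ℂ) * ε ^ b) := by
        intro b _
        ring
      have hmid : ∑ b ∈ range (m t),
          (((M' : ℂ) * (C - (a : ℂ) * (Mn : ℂ)) - ∑ c ∈ range M', (c : ℂ)) * ε ^ b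
            - ((M' : ℂ) * (M' : ℂ)) * ((b : ℂ) * ε ^ b))
          = -((M' : ℂ) * (M' : ℂ)) * B := by
        rw [Finset.sum_sub_distrib, ← Finset.mul_sum, ← Finset.mul_sum, hgeps, mul_zero,
          zero_sub]
        rw [hB]
        ring
      rw [Finset.sum_congr rfl hsplit, hmid]
      ring
    rw [Finset.sum_congr rfl hinner, ← Finset.sum_mul, ← hGs]
  -- norms
  have hnormε : ‖ε - 1‖ = 2 * Real.sin (Real.pi / m t) := by
    rw [hε, norm_exp_I_sub_one, hθ₁]
    rw [show 2 * Real.pi / (m t) / 2 = Real.pi / m t by ring]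
    rw [abs_of_nonneg (Real.sin_nonneg_of_nonneg_of_le_pi (by positivity)
      (by
        rw [div_le_iff₀ hmt0R]
        exact le_mul_of_one_le_right hπ.le (by linarith)))]
  have hδpows : δ ^ s = Complex.exp (↑((s : ℝ) * θ₂) * Complex.I) := by
    rw [hδ, ← Complex.exp_nat_mul]
    congr 1
    push_cast
    ring
  have hnormδs : ‖δ ^ s - 1‖ = 2 * Real.sin (Real.pi * s / m (t + 1)) := by
    rw [hδpows, norm_exp_I_sub_one, hθ₂]
    rw [show (s : ℝ) * (2 * Real.pi / (m (t + 1))) / 2 = Real.pi * s / m (t + 1) by ring]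
    rw [abs_of_nonneg (Real.sin_nonneg_of_nonneg_of_le_pi (by positivity)
      (by
        rw [div_le_iff₀ hmn0R]
        exact mul_le_mul_of_nonneg_left hsR hπ.le))]
  have hnormδ : ‖δ - 1‖ = 2 * Real.sin (Real.pi / m (t + 1)) := by
    rw [hδ, norm_exp_I_sub_one, hθ₂]
    rw [show 2 * Real.pi / (m (t + 1)) / 2 = Real.pi / m (t + 1) by ring]
    rw [abs_of_nonneg (Real.sin_nonneg_of_nonneg_of_le_pi (by positivity)
      (by
        rw [div_le_iff₀ hmn0R]
        exact le_mul_of_one_le_right hπ.le (by linarith)))]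
  have hεpos : 0 < ‖ε - 1‖ := by
    rw [norm_pos_iff]
    exact sub_ne_zero.mpr hεne
  have hδpos : 0 < ‖δ - 1‖ := by
    rw [norm_pos_iff]
    exact sub_ne_zero.mpr hδne
  have hεle : ‖ε - 1‖ ≤ 2 * Real.pi / m t := by
    rw [hnormε]
    have h1 : Real.sin (Real.pi / m t) ≤ Real.pi / m t :=
      le_of_lt (Real.sin_lt (by positivity))
    rw [show 2 * Real.pi / (m t : ℝ) = 2 * (Real.pi / m t) by ring]
    linarith
  have hds : ‖δ - 1‖ ≤ ‖δ ^ s - 1‖ := by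
    rw [hnormδ, hnormδs]
    have := sin_div_le (m (t + 1)) s hmn hs1 hs2
    linarith
  have hBnorm : ‖ε - 1‖ * ‖B‖ = m t := by
    rw [← norm_mul, key_sum ε (m t) hεne hεpow, Complex.norm_natCast]
  have hGmul : ‖δ - 1‖ * ‖Gs‖ = ‖δ ^ s - 1‖ := by
    rw [← norm_mul]
    congr 1
    rw [hGs, mul_comm]
    exact geom_sum_mul δ s
  have hG1 : 1 ≤ ‖Gs‖ := by
    nlinarith
  have hBge : (m t : ℝ) * (m t : ℝ) / (2 * Real.pi) ≤ ‖B‖ := by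
    have h1 : ‖B‖ * (2 * Real.pi / m t) ≥ ‖B‖ * ‖ε - 1‖ := by
      apply mul_le_mul_of_nonneg_left hεle (norm_nonneg _)
    have h2 : ‖B‖ * ‖ε - 1‖ = m t := by rw [mul_comm]; exact hBnorm
    rw [ge_iff_le, h2] at h1
    rw [div_le_iff₀ (by positivity)]
    calc (m t : ℝ) * (m t : ℝ) ≤ (‖B‖ * (2 * Real.pi / m t)) * m t :=
        mul_le_mul_of_nonneg_right h1 hmt0R.le
      _ = ‖B‖ * (2 * Real.pi) := by field_simp
  -- final computation
  have hTnorm : ‖T‖ = ‖Gs‖ * ((M' : ℝ) * (M' : ℝ) * ‖B‖) := by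
    rw [hTC, norm_mul, norm_mul, norm_neg, norm_mul, Complex.norm_natCast]
  rw [hTnorm]
  have hMnR : (Mn : ℝ) = (m t : ℝ) * (M' : ℝ) := by
    rw [hMn]; push_cast; ring
  rw [hMnR]
  have hM'R : (0:ℝ) < (M' : ℝ) := by exact_mod_cast hM'pos
  have hBnn : (0:ℝ) ≤ ‖B‖ := norm_nonneg _
  rw [div_le_iff₀ (by positivity)]
  calc ((m t : ℝ) * (M' : ℝ)) ^ 2 = (M' : ℝ) * (M' : ℝ) * ((m t : ℝ) * (m t : ℝ)) := by ring
    _ ≤ (M' : ℝ) * (M' : ℝ) * (‖B‖ * (2 * Real.pi)) := by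
        apply mul_le_mul_of_nonneg_left _ (by positivity)
        rw [div_le_iff₀ (by positivity)] at hBge
        linarith
    _ = 1 * ((M' : ℝ) * (M' : ℝ) * ‖B‖) * (2 * Real.pi) := by ring
    _ ≤ ‖Gs‖ * ((M' : ℝ) * (M' : ℝ) * ‖B‖) * (2 * Real.pi) := by
        apply mul_le_mul_of_nonneg_right _ (by positivity)
        apply mul_le_mul_of_nonneg_right hG1 (by positivity)


end Vilenkin

end
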